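/- Define C_l = Σ_{j=1}^l (6 + j) for l ≥ 0 (so C_0 = 0, C_1 = 7, C_2 = 15, ...). Let B_l be the maximum of ∏_{i=1}^I n_i over all strictly increasing sequences of integers 7 ≤ n_1 < n_2 < ... < n_I with Σ n_i ≤ m, taken uniformly over m with C_l < m ≤ C_{l+1}. Then for all l ≥ 1, B_l ≤ 2^l · ∏_{j=1}^{l+1} (6 + j). -/

import Mathlib

open Finset

private lemma key_ineq (a b : ℕ) (hab : a < b) :
    ∑ j ∈ Ioc a (b+1), (6+j) ≤ 2^(b-a) * ∏ j ∈ Ioc (a+1) (b+1), (6+j) := by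
  induction b with
  | zero => omega
  | succ b ih =>
    rcases Nat.lt_or_ge a b with h | h
    · rw [Finset.sum_Ioc_succ_top (by omega : a ≤ b+1),
          Finset.prod_Ioc_succ_top (by omega : a+1 ≤ b+1)]
      have h2 := ih h
      have hP : 1 ≤ ∏ j ∈ Ioc (a+1) (b+1), (6+j) :=
        Finset.one_le_prod' (fun i _ => by omega)
      have hpow : 1 ≤ 2^(b-a) := Nat.one_le_two_pow
      have hba : b + 1 - a = (b - a) + 1 := by omega
      rw [hba, pow_succ]
      nlinarith [Nat.mul_le_mul hpow hP]
    · have : a = b := by omega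
      subst this
      rw [Finset.sum_Ioc_succ_top (by omega : a ≤ a+1),
          Finset.sum_Ioc_succ_top (by omega : a ≤ a),
          Finset.prod_Ioc_succ_top (by omega : a+1 ≤ a+1),
          Finset.Ioc_self, Finset.Ioc_self]
      simp; omega

private lemma sum_le_bound (l : ℕ) :
    ∑ j ∈ Ioc 0 (l+1), (6+j) ≤ 2^l * ∏ j ∈ Ioc 0 (l+1), (6+j) := by
  rcases Nat.eq_zero_or_pos l with h0 | h0
  · subst h0; simp
  · refine le_trans (key_ineq 0 l h0) ?_
    have hsub : Ioc 1 (l+1) ⊆ Ioc 0 (l+1) := Finset.Ioc_subset_Ioc_left (by omega)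
    have h : ∏ j ∈ Ioc 1 (l+1), (6+j) ≤ ∏ j ∈ Ioc 0 (l+1), (6+j) :=
      Finset.prod_le_prod_of_subset_of_one_le' hsub (fun i _ _ => by omega)
    simpa using Nat.mul_le_mul_left (2^l) h

private lemma main_bound : ∀ l I (n : Fin I → ℕ), StrictMono n → (∀ i, 7 ≤ n i) →
    ∑ i, n i ≤ ∑ j ∈ Ioc 0 (l+1), (6+j) →
    ∏ i, n i ≤ 2^l * ∏ j ∈ Ioc 0 (l+1), (6+j) := by
  intro l
  induction l using Nat.strong_induction_on with
  | _ l IH =>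
  intro I n hmono hge hsum
  match I, n, hmono, hge, hsum with
  | 0, n, hmono, hge, hsum =>
    simpa using Nat.one_le_two_pow.trans
      (Nat.le_mul_of_pos_right (2^l) (Finset.prod_pos (fun i _ => by omega)))
  | I'+1, n, hmono, hge, hsum =>
    rw [Fin.sum_univ_castSucc] at hsum
    rw [Fin.prod_univ_castSucc]
    set t := n (Fin.last I') with ht_def
    set S' := ∑ i : Fin I', n i.castSucc with hS'_def
    rcases Nat.eq_zero_or_pos I' with hI0 | hI0
    · subst hI0
      have h7 : 7 ≤ t := hge _
      have hle : t ≤ ∑ j ∈ Ioc 0 (l+1), (6+j) := by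
        have : S' = 0 := by simp [hS'_def]
        omega
      simpa using hle.trans (sum_le_bound l)
    · -- I' ≥ 1, so S' ≥ 7
      have hS7 : 7 ≤ S' := by
        have h1 := Finset.single_le_sum (f := fun i : Fin I' => n i.castSucc)
          (fun i _ => Nat.zero_le _) (Finset.mem_univ ⟨0, hI0⟩)
        exact le_trans (hge (Fin.castSucc ⟨0, hI0⟩)) h1
      have hmono' : StrictMono (fun i : Fin I' => n i.castSucc) :=
        fun i j h => hmono (Fin.castSucc_lt_castSucc_iff.mpr h)
      have hge' : ∀ i : Fin I', 7 ≤ n i.castSucc := fun i => hge _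
      by_cases hcase : S' ≤ ∑ j ∈ Ioc 0 l, (6+j)
      · -- Case B: remove largest term, apply IH
        rcases l with _ | l0
        · simp at hcase; omega
        have hex : ∃ k, S' ≤ ∑ j ∈ Ioc 0 (k+1), (6+j) := ⟨l0, hcase⟩
        set l' := Nat.find hex with hl'_def
        have hfind : S' ≤ ∑ j ∈ Ioc 0 (l'+1), (6+j) := Nat.find_spec hex
        have hl'le : l' ≤ l0 := Nat.find_min' hex hcase
        have hlow : ∑ j ∈ Ioc 0 l', (6 + j) < S' := by
          rcases Nat.eq_zero_or_pos l' with h0 | h0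
          · rw [h0]; simp; omega
          · have hmin := Nat.find_min hex (show l' - 1 < l' by omega)
            rw [Nat.sub_add_cancel h0] at hmin; omega
        have hprod' := IH l' (by omega) I' _ hmono' hge' hfind
        have hsplit : ∑ j ∈ Ioc 0 l', (6+j) + ∑ j ∈ Ioc l' (l0+1+1), (6+j)
            = ∑ j ∈ Ioc 0 (l0+1+1), (6+j) :=
          Finset.sum_Ioc_consecutive _ (Nat.zero_le _) (by omega)
        have ht : t ≤ ∑ j ∈ Ioc l' (l0+1+1), (6+j) := by omega
        have hkey := key_ineq l' (l0+1) (by omega)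
        have hpsplit : (∏ j ∈ Ioc 0 (l'+1), (6+j)) * ∏ j ∈ Ioc (l'+1) (l0+1+1), (6+j)
            = ∏ j ∈ Ioc 0 (l0+1+1), (6+j) :=
          Finset.prod_Ioc_consecutive _ (Nat.zero_le _) (by omega)
        have h1 : (∏ i : Fin I', n i.castSucc) * t
            ≤ (2^l' * ∏ j ∈ Ioc 0 (l'+1), (6+j))
              * (2^(l0+1-l') * ∏ j ∈ Ioc (l'+1) (l0+1+1), (6+j)) :=
          Nat.mul_le_mul hprod' (ht.trans hkey)
        refine h1.trans_eq ?_
        rw [← hpsplit, show (2:ℕ)^(l0+1) = 2^l' * 2^(l0+1-l') by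
          rw [← pow_add]; congr 1; omega]
        ring
      · -- Case A: all terms at most l+6
        have hCsucc : ∑ j ∈ Ioc 0 (l+1), (6+j) = ∑ j ∈ Ioc 0 l, (6+j) + (6+(l+1)) :=
          Finset.sum_Ioc_succ_top (Nat.zero_le _) _
        have ht : t ≤ l + 6 := by omega
        have hall : ∀ i : Fin (I'+1), n i ∈ Finset.Icc 7 (l+6) := by
          intro i
          rw [Finset.mem_Icc]
          exact ⟨hge i, le_trans (hmono.monotone (Fin.le_last i)) ht⟩
        rw [← Fin.prod_univ_castSucc]
        have h1 : ∏ i, n i = ∏ x ∈ Finset.image n Finset.univ, x := by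
          rw [Finset.prod_image (fun x _ y _ h => hmono.injective h)]
        have h2 : Finset.image n Finset.univ ⊆ Finset.Icc 7 (l+6) := by
          intro x hx
          rcases Finset.mem_image.mp hx with ⟨i, _, rfl⟩
          exact hall i
        have h3 : ∏ x ∈ Finset.image n Finset.univ, x ≤ ∏ x ∈ Finset.Icc 7 (l+6), x :=
          Finset.prod_le_prod_of_subset_of_one_le' h2
            (fun i hi _ => by rw [Finset.mem_Icc] at hi; omega)
        have himg : Finset.image (fun j => 6+j) (Ioc 0 l) = Finset.Icc 7 (l+6) := by
          ext x
          simp only [Finset.mem_image, Finset.mem_Ioc, Finset.mem_Icc]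
          constructor
          · rintro ⟨j, ⟨hj1, hj2⟩, rfl⟩; omega
          · intro h; exact ⟨x - 6, by omega, by omega⟩
        have h4 : ∏ x ∈ Finset.Icc 7 (l+6), x = ∏ j ∈ Ioc 0 l, (6+j) := by
          rw [← himg, Finset.prod_image (fun x _ y _ h => by omega)]
        have h5 : ∏ j ∈ Ioc 0 l, (6+j) ≤ ∏ j ∈ Ioc 0 (l+1), (6+j) :=
          Finset.prod_le_prod_of_subset_of_one_le'
            (Finset.Ioc_subset_Ioc_right (by omega)) (fun i _ _ => by omega)
        calc ∏ i, n i = ∏ x ∈ Finset.image n Finset.univ, x := h1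
          _ ≤ ∏ x ∈ Finset.Icc 7 (l+6), x := h3
          _ = ∏ j ∈ Ioc 0 l, (6+j) := h4
          _ ≤ ∏ j ∈ Ioc 0 (l+1), (6+j) := h5
          _ ≤ 2^l * ∏ j ∈ Ioc 0 (l+1), (6+j) :=
              Nat.le_mul_of_pos_left _ (Nat.pow_pos (by omega))


/-- With `C_l = ∑_{j=1}^l (6+j)`, any strictly increasing sequence of integers
`7 ≤ n_1 < ⋯ < n_I` with `∑ n_i ≤ m` for some `m` with `C_l < m ≤ C_{l+1}`,
`l ≥ 1`, satisfies `∏ n_i ≤ 2^l · ∏_{j=1}^{l+1} (6+j)`. -/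
theorem product_bound_of_sum_bound
    (l : ℕ) (hl : 1 ≤ l) (m : ℕ)
    (hm₁ : ∑ j ∈ Finset.Icc 1 l, (6 + j) < m)
    (hm₂ : m ≤ ∑ j ∈ Finset.Icc 1 (l + 1), (6 + j))
    (I : ℕ) (n : Fin I → ℕ) (hmono : StrictMono n) (hge : ∀ i, 7 ≤ n i)
    (hsum : ∑ i, n i ≤ m) :
    ∏ i, n i ≤ 2 ^ l * ∏ j ∈ Finset.Icc 1 (l + 1), (6 + j) := by
  rw [show (1:ℕ) = 0 + 1 from rfl, Finset.Icc_add_one_left_eq_Ioc] at hm₂ ⊢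
  exact main_bound l I n hmono hge (hsum.trans hm₂)
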